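/- Let σ(u,v) = (4u/(u²+v²+4), 4v/(u²+v²+4), 2(u²+v²)/(u²+v²+4)) be the inverse stereographic projection onto the sphere x² + y² + (z−1)² = 1 and let c = (0,0,1). If p : ℝ³ → ℝ is a polynomial function that is homogeneous of degree n (p(t·x) = tⁿ·p(x) for all t ∈ ℝ, x ∈ ℝ³) and harmonic (∂²p/∂x² + ∂²p/∂y² + ∂²p/∂z² = 0 identically), then the function f(u,v) = p(σ(u,v) − c) satisfies, at every point (u,v) ∈ ℝ²: ∂²f/∂u² + ∂²f/∂v² = −n(n+1)·(4/(u² + v² + 4))²·f(u,v). -/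

import Mathlib

/-- The planar Laplacian `∂²f/∂u² + ∂²f/∂v²` of `f : ℝ × ℝ → ℝ` at a point `q`. -/
noncomputable def lap2 (f : ℝ × ℝ → ℝ) (q : ℝ × ℝ) : ℝ :=
  deriv (deriv fun u => f (u, q.2)) q.1 + deriv (deriv fun v => f (q.1, v)) q.2

/-- Partial derivative in the `i`-th coordinate of a function on `ℝ³ = Fin 3 → ℝ`. -/
noncomputable def pd (i : Fin 3) (f : (Fin 3 → ℝ) → ℝ) (x : Fin 3 → ℝ) : ℝ :=
  deriv (fun s => f (Function.update x i s)) (x i)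

/-- The inverse stereographic projection onto the unit sphere centered at `(0,0,1)`,
as a map into `ℝ³ = Fin 3 → ℝ`. -/
noncomputable def invStereo3 (q : ℝ × ℝ) : Fin 3 → ℝ :=
  ![4 * q.1 / (q.1 ^ 2 + q.2 ^ 2 + 4),
    4 * q.2 / (q.1 ^ 2 + q.2 ^ 2 + 4),
    2 * (q.1 ^ 2 + q.2 ^ 2) / (q.1 ^ 2 + q.2 ^ 2 + 4)]

open MvPolynomial

lemma hasDerivAt_eval_comp (P : MvPolynomial (Fin 3) ℝ) {x : ℝ → Fin 3 → ℝ}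
    {d : Fin 3 → ℝ} {t : ℝ} (hx : ∀ k, HasDerivAt (fun s => x s k) (d k) t) :
    HasDerivAt (fun s => eval (x s) P)
      (∑ k, eval (x t) (pderiv k P) * d k) t := by
  induction P using MvPolynomial.induction_on with
  | C a => simpa [pderiv_C] using hasDerivAt_const t (a : ℝ)
  | add P Q hP hQ =>
      rw [show (fun s => eval (x s) (P + Q)) = fun s => eval (x s) P + eval (x s) Q from
        funext fun s => map_add _ _ _]
      exact (hP.add hQ).congr_deriv (by simp [map_add, add_mul, Finset.sum_add_distrib])
  | mul_X P j hP =>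
      have h := hP.mul (hx j)
      have he : (fun s => eval (x s) (P * X j)) = fun s => eval (x s) P * x s j := by
        funext s; simp
      rw [he]
      refine h.congr_deriv ?_
      fin_cases j <;>
        simp [Fin.sum_univ_three, pderiv_mul, Pi.single_apply] <;> ring

lemma pderiv_comm' (i k : Fin 3) (P : MvPolynomial (Fin 3) ℝ) :
    pderiv i (pderiv k P) = pderiv k (pderiv i P) := by
  induction P using MvPolynomial.induction_on with
  | C a => simp [pderiv_C]
  | add P Q hP hQ => simp [map_add, hP, hQ]
  | mul_X P j hP =>
      simp only [pderiv_mul, map_add, hP, pderiv_X, Pi.single_apply]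
      split_ifs <;> simp [pderiv_one, pderiv_C] <;> ring

lemma main_u (P : MvPolynomial (Fin 3) ℝ) (m : ℕ) (v u : ℝ) :
    deriv (deriv (fun a : ℝ =>
        ((a ^ 2 + v ^ 2 + 4)⁻¹) ^ (m + 1) * eval ![4 * a, 4 * v, a ^ 2 + v ^ 2 - 4] P)) u =
      -2 * ((m : ℝ) + 1) * ((u ^ 2 + v ^ 2 + 4)⁻¹) ^ m * ((u ^ 2 + v ^ 2 + 4)⁻¹) ^ 2 *
          eval ![4 * u, 4 * v, u ^ 2 + v ^ 2 - 4] P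
      + 4 * ((m : ℝ) + 1) * ((m : ℝ) + 2) * u ^ 2 * ((u ^ 2 + v ^ 2 + 4)⁻¹) ^ m *
          ((u ^ 2 + v ^ 2 + 4)⁻¹) ^ 3 * eval ![4 * u, 4 * v, u ^ 2 + v ^ 2 - 4] P
      - 4 * ((m : ℝ) + 1) * u * ((u ^ 2 + v ^ 2 + 4)⁻¹) ^ m * ((u ^ 2 + v ^ 2 + 4)⁻¹) ^ 2 *
          (4 * eval ![4 * u, 4 * v, u ^ 2 + v ^ 2 - 4] (pderiv 0 P)
            + 2 * u * eval ![4 * u, 4 * v, u ^ 2 + v ^ 2 - 4] (pderiv 2 P))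
      + ((u ^ 2 + v ^ 2 + 4)⁻¹) ^ m * ((u ^ 2 + v ^ 2 + 4)⁻¹) *
          (16 * eval ![4 * u, 4 * v, u ^ 2 + v ^ 2 - 4] (pderiv 0 (pderiv 0 P))
            + 16 * u * eval ![4 * u, 4 * v, u ^ 2 + v ^ 2 - 4] (pderiv 0 (pderiv 2 P))
            + 2 * eval ![4 * u, 4 * v, u ^ 2 + v ^ 2 - 4] (pderiv 2 P)
            + 4 * u ^ 2 * eval ![4 * u, 4 * v, u ^ 2 + v ^ 2 - 4] (pderiv 2 (pderiv 2 P))) := by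
  have hsne : ∀ a : ℝ, a ^ 2 + v ^ 2 + 4 ≠ 0 := fun a => by positivity
  have hcurve : ∀ a : ℝ, ∀ k : Fin 3,
      HasDerivAt (fun a' : ℝ => (![4 * a', 4 * v, a' ^ 2 + v ^ 2 - 4] : Fin 3 → ℝ) k)
        ((![4, 0, 2 * a] : Fin 3 → ℝ) k) a := by
    intro a k
    fin_cases k
    · simpa using (hasDerivAt_id a).const_mul (4 : ℝ)
    · simpa using hasDerivAt_const a (4 * v)
    · simpa using ((hasDerivAt_pow 2 a).add_const (v ^ 2)).sub_const 4
  have hQ : ∀ (Q : MvPolynomial (Fin 3) ℝ) (a : ℝ),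
      HasDerivAt (fun a' : ℝ => eval ![4 * a', 4 * v, a' ^ 2 + v ^ 2 - 4] Q)
        (4 * eval ![4 * a, 4 * v, a ^ 2 + v ^ 2 - 4] (pderiv 0 Q)
          + 2 * a * eval ![4 * a, 4 * v, a ^ 2 + v ^ 2 - 4] (pderiv 2 Q)) a := by
    intro Q a
    have h := hasDerivAt_eval_comp Q (hcurve a)
    refine h.congr_deriv ?_
    simp [Fin.sum_univ_three]
    ring
  have hT : ∀ (k : ℕ) (a : ℝ),
      HasDerivAt (fun a' : ℝ => ((a' ^ 2 + v ^ 2 + 4)⁻¹) ^ k)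
        (-(k : ℝ) * (2 * a) * ((a ^ 2 + v ^ 2 + 4)⁻¹) ^ (k + 1)) a := by
    intro k a
    have h1 : HasDerivAt (fun a' : ℝ => a' ^ 2 + v ^ 2 + 4) (2 * a) a := by
      simpa using ((hasDerivAt_pow 2 a).add_const (v ^ 2)).add_const 4
    have h2 := (h1.inv (hsne a)).pow k
    refine h2.congr_deriv ?_
    symm
    rcases k with _ | k
    · norm_num
    · rw [div_eq_mul_inv, ← inv_pow]
      have e : k + 1 - 1 = k := rfl
      rw [e]
      push_cast
      simp only [Pi.inv_apply]
      ring
  have hF : ∀ a : ℝ, HasDerivAt (fun a' : ℝ =>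
      ((a' ^ 2 + v ^ 2 + 4)⁻¹) ^ (m + 1) * eval ![4 * a', 4 * v, a' ^ 2 + v ^ 2 - 4] P)
      (-(2 * ((m : ℝ) + 1)) * a * ((a ^ 2 + v ^ 2 + 4)⁻¹) ^ (m + 2) *
          eval ![4 * a, 4 * v, a ^ 2 + v ^ 2 - 4] P
        + ((a ^ 2 + v ^ 2 + 4)⁻¹) ^ (m + 1) *
          (4 * eval ![4 * a, 4 * v, a ^ 2 + v ^ 2 - 4] (pderiv 0 P)
            + 2 * a * eval ![4 * a, 4 * v, a ^ 2 + v ^ 2 - 4] (pderiv 2 P))) a := by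
    intro a
    have h := (hT (m + 1) a).mul (hQ P a)
    refine h.congr_deriv ?_
    push_cast
    ring
  have hd1 : deriv (fun a : ℝ =>
      ((a ^ 2 + v ^ 2 + 4)⁻¹) ^ (m + 1) * eval ![4 * a, 4 * v, a ^ 2 + v ^ 2 - 4] P)
      = fun a : ℝ =>
      -(2 * ((m : ℝ) + 1)) * a * ((a ^ 2 + v ^ 2 + 4)⁻¹) ^ (m + 2) *
          eval ![4 * a, 4 * v, a ^ 2 + v ^ 2 - 4] P
        + ((a ^ 2 + v ^ 2 + 4)⁻¹) ^ (m + 1) *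
          (4 * eval ![4 * a, 4 * v, a ^ 2 + v ^ 2 - 4] (pderiv 0 P)
            + 2 * a * eval ![4 * a, 4 * v, a ^ 2 + v ^ 2 - 4] (pderiv 2 P)) :=
    funext fun a => (hF a).deriv
  rw [hd1]
  have hF1 : HasDerivAt (fun a : ℝ =>
      -(2 * ((m : ℝ) + 1)) * a * ((a ^ 2 + v ^ 2 + 4)⁻¹) ^ (m + 2) *
          eval ![4 * a, 4 * v, a ^ 2 + v ^ 2 - 4] P
        + ((a ^ 2 + v ^ 2 + 4)⁻¹) ^ (m + 1) *
          (4 * eval ![4 * a, 4 * v, a ^ 2 + v ^ 2 - 4] (pderiv 0 P)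
            + 2 * a * eval ![4 * a, 4 * v, a ^ 2 + v ^ 2 - 4] (pderiv 2 P)))
      (-2 * ((m : ℝ) + 1) * ((u ^ 2 + v ^ 2 + 4)⁻¹) ^ m * ((u ^ 2 + v ^ 2 + 4)⁻¹) ^ 2 *
          eval ![4 * u, 4 * v, u ^ 2 + v ^ 2 - 4] P
      + 4 * ((m : ℝ) + 1) * ((m : ℝ) + 2) * u ^ 2 * ((u ^ 2 + v ^ 2 + 4)⁻¹) ^ m *
          ((u ^ 2 + v ^ 2 + 4)⁻¹) ^ 3 * eval ![4 * u, 4 * v, u ^ 2 + v ^ 2 - 4] P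
      - 4 * ((m : ℝ) + 1) * u * ((u ^ 2 + v ^ 2 + 4)⁻¹) ^ m * ((u ^ 2 + v ^ 2 + 4)⁻¹) ^ 2 *
          (4 * eval ![4 * u, 4 * v, u ^ 2 + v ^ 2 - 4] (pderiv 0 P)
            + 2 * u * eval ![4 * u, 4 * v, u ^ 2 + v ^ 2 - 4] (pderiv 2 P))
      + ((u ^ 2 + v ^ 2 + 4)⁻¹) ^ m * ((u ^ 2 + v ^ 2 + 4)⁻¹) *
          (16 * eval ![4 * u, 4 * v, u ^ 2 + v ^ 2 - 4] (pderiv 0 (pderiv 0 P))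
            + 16 * u * eval ![4 * u, 4 * v, u ^ 2 + v ^ 2 - 4] (pderiv 0 (pderiv 2 P))
            + 2 * eval ![4 * u, 4 * v, u ^ 2 + v ^ 2 - 4] (pderiv 2 P)
            + 4 * u ^ 2 * eval ![4 * u, 4 * v, u ^ 2 + v ^ 2 - 4] (pderiv 2 (pderiv 2 P)))) u := by
    refine (((((hasDerivAt_id u).const_mul (-(2 * ((m : ℝ) + 1)))).mul (hT (m + 2) u)).mul
        (hQ P u)).add ((hT (m + 1) u).mul (((hQ (pderiv 0 P) u).const_mul 4).add
        (((hasDerivAt_id u).const_mul 2).mul (hQ (pderiv 2 P) u))))).congr_deriv ?_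
    rw [show pderiv 2 (pderiv 0 P) = pderiv 0 (pderiv 2 P) from pderiv_comm' 2 0 P]
    simp only [id_eq, Pi.add_apply, Pi.mul_apply]
    push_cast
    ring
  exact hF1.deriv

lemma main_v (P : MvPolynomial (Fin 3) ℝ) (m : ℕ) (u v : ℝ) :
    deriv (deriv (fun b : ℝ =>
        ((u ^ 2 + b ^ 2 + 4)⁻¹) ^ (m + 1) * eval ![4 * u, 4 * b, u ^ 2 + b ^ 2 - 4] P)) v =
      -2 * ((m : ℝ) + 1) * ((u ^ 2 + v ^ 2 + 4)⁻¹) ^ m * ((u ^ 2 + v ^ 2 + 4)⁻¹) ^ 2 *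
          eval ![4 * u, 4 * v, u ^ 2 + v ^ 2 - 4] P
      + 4 * ((m : ℝ) + 1) * ((m : ℝ) + 2) * v ^ 2 * ((u ^ 2 + v ^ 2 + 4)⁻¹) ^ m *
          ((u ^ 2 + v ^ 2 + 4)⁻¹) ^ 3 * eval ![4 * u, 4 * v, u ^ 2 + v ^ 2 - 4] P
      - 4 * ((m : ℝ) + 1) * v * ((u ^ 2 + v ^ 2 + 4)⁻¹) ^ m * ((u ^ 2 + v ^ 2 + 4)⁻¹) ^ 2 *
          (4 * eval ![4 * u, 4 * v, u ^ 2 + v ^ 2 - 4] (pderiv 1 P)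
            + 2 * v * eval ![4 * u, 4 * v, u ^ 2 + v ^ 2 - 4] (pderiv 2 P))
      + ((u ^ 2 + v ^ 2 + 4)⁻¹) ^ m * ((u ^ 2 + v ^ 2 + 4)⁻¹) *
          (16 * eval ![4 * u, 4 * v, u ^ 2 + v ^ 2 - 4] (pderiv 1 (pderiv 1 P))
            + 16 * v * eval ![4 * u, 4 * v, u ^ 2 + v ^ 2 - 4] (pderiv 1 (pderiv 2 P))
            + 2 * eval ![4 * u, 4 * v, u ^ 2 + v ^ 2 - 4] (pderiv 2 P)
            + 4 * v ^ 2 * eval ![4 * u, 4 * v, u ^ 2 + v ^ 2 - 4] (pderiv 2 (pderiv 2 P))) := by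
  have hsne : ∀ b : ℝ, u ^ 2 + b ^ 2 + 4 ≠ 0 := fun b => by positivity
  have hcurve : ∀ b : ℝ, ∀ k : Fin 3,
      HasDerivAt (fun b' : ℝ => (![4 * u, 4 * b', u ^ 2 + b' ^ 2 - 4] : Fin 3 → ℝ) k)
        ((![0, 4, 2 * b] : Fin 3 → ℝ) k) b := by
    intro b k
    fin_cases k
    · simpa using hasDerivAt_const b (4 * u)
    · simpa using (hasDerivAt_id b).const_mul (4 : ℝ)
    · simpa using ((hasDerivAt_pow 2 b).const_add (u ^ 2)).sub_const 4
  have hQ : ∀ (Q : MvPolynomial (Fin 3) ℝ) (b : ℝ),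
      HasDerivAt (fun b' : ℝ => eval ![4 * u, 4 * b', u ^ 2 + b' ^ 2 - 4] Q)
        (4 * eval ![4 * u, 4 * b, u ^ 2 + b ^ 2 - 4] (pderiv 1 Q)
          + 2 * b * eval ![4 * u, 4 * b, u ^ 2 + b ^ 2 - 4] (pderiv 2 Q)) b := by
    intro Q b
    have h := hasDerivAt_eval_comp Q (hcurve b)
    refine h.congr_deriv ?_
    simp [Fin.sum_univ_three]
    ring
  have hT : ∀ (k : ℕ) (b : ℝ),
      HasDerivAt (fun b' : ℝ => ((u ^ 2 + b' ^ 2 + 4)⁻¹) ^ k)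
        (-(k : ℝ) * (2 * b) * ((u ^ 2 + b ^ 2 + 4)⁻¹) ^ (k + 1)) b := by
    intro k b
    have h1 : HasDerivAt (fun b' : ℝ => u ^ 2 + b' ^ 2 + 4) (2 * b) b := by
      simpa using (((hasDerivAt_pow 2 b).const_add (u ^ 2)).add_const 4)
    have h2 := (h1.inv (hsne b)).pow k
    refine h2.congr_deriv ?_
    symm
    rcases k with _ | k
    · norm_num
    · rw [div_eq_mul_inv, ← inv_pow]
      have e : k + 1 - 1 = k := rfl
      rw [e]
      push_cast
      simp only [Pi.inv_apply]
      ring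
  have hF : ∀ b : ℝ, HasDerivAt (fun b' : ℝ =>
      ((u ^ 2 + b' ^ 2 + 4)⁻¹) ^ (m + 1) * eval ![4 * u, 4 * b', u ^ 2 + b' ^ 2 - 4] P)
      (-(2 * ((m : ℝ) + 1)) * b * ((u ^ 2 + b ^ 2 + 4)⁻¹) ^ (m + 2) *
          eval ![4 * u, 4 * b, u ^ 2 + b ^ 2 - 4] P
        + ((u ^ 2 + b ^ 2 + 4)⁻¹) ^ (m + 1) *
          (4 * eval ![4 * u, 4 * b, u ^ 2 + b ^ 2 - 4] (pderiv 1 P)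
            + 2 * b * eval ![4 * u, 4 * b, u ^ 2 + b ^ 2 - 4] (pderiv 2 P))) b := by
    intro b
    have h := (hT (m + 1) b).mul (hQ P b)
    refine h.congr_deriv ?_
    push_cast
    ring
  have hd1 : deriv (fun b : ℝ =>
      ((u ^ 2 + b ^ 2 + 4)⁻¹) ^ (m + 1) * eval ![4 * u, 4 * b, u ^ 2 + b ^ 2 - 4] P)
      = fun b : ℝ =>
      -(2 * ((m : ℝ) + 1)) * b * ((u ^ 2 + b ^ 2 + 4)⁻¹) ^ (m + 2) *
          eval ![4 * u, 4 * b, u ^ 2 + b ^ 2 - 4] P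
        + ((u ^ 2 + b ^ 2 + 4)⁻¹) ^ (m + 1) *
          (4 * eval ![4 * u, 4 * b, u ^ 2 + b ^ 2 - 4] (pderiv 1 P)
            + 2 * b * eval ![4 * u, 4 * b, u ^ 2 + b ^ 2 - 4] (pderiv 2 P)) :=
    funext fun b => (hF b).deriv
  rw [hd1]
  have hF1 : HasDerivAt (fun b : ℝ =>
      -(2 * ((m : ℝ) + 1)) * b * ((u ^ 2 + b ^ 2 + 4)⁻¹) ^ (m + 2) *
          eval ![4 * u, 4 * b, u ^ 2 + b ^ 2 - 4] P
        + ((u ^ 2 + b ^ 2 + 4)⁻¹) ^ (m + 1) *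
          (4 * eval ![4 * u, 4 * b, u ^ 2 + b ^ 2 - 4] (pderiv 1 P)
            + 2 * b * eval ![4 * u, 4 * b, u ^ 2 + b ^ 2 - 4] (pderiv 2 P)))
      (-2 * ((m : ℝ) + 1) * ((u ^ 2 + v ^ 2 + 4)⁻¹) ^ m * ((u ^ 2 + v ^ 2 + 4)⁻¹) ^ 2 *
          eval ![4 * u, 4 * v, u ^ 2 + v ^ 2 - 4] P
      + 4 * ((m : ℝ) + 1) * ((m : ℝ) + 2) * v ^ 2 * ((u ^ 2 + v ^ 2 + 4)⁻¹) ^ m *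
          ((u ^ 2 + v ^ 2 + 4)⁻¹) ^ 3 * eval ![4 * u, 4 * v, u ^ 2 + v ^ 2 - 4] P
      - 4 * ((m : ℝ) + 1) * v * ((u ^ 2 + v ^ 2 + 4)⁻¹) ^ m * ((u ^ 2 + v ^ 2 + 4)⁻¹) ^ 2 *
          (4 * eval ![4 * u, 4 * v, u ^ 2 + v ^ 2 - 4] (pderiv 1 P)
            + 2 * v * eval ![4 * u, 4 * v, u ^ 2 + v ^ 2 - 4] (pderiv 2 P))
      + ((u ^ 2 + v ^ 2 + 4)⁻¹) ^ m * ((u ^ 2 + v ^ 2 + 4)⁻¹) *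
          (16 * eval ![4 * u, 4 * v, u ^ 2 + v ^ 2 - 4] (pderiv 1 (pderiv 1 P))
            + 16 * v * eval ![4 * u, 4 * v, u ^ 2 + v ^ 2 - 4] (pderiv 1 (pderiv 2 P))
            + 2 * eval ![4 * u, 4 * v, u ^ 2 + v ^ 2 - 4] (pderiv 2 P)
            + 4 * v ^ 2 * eval ![4 * u, 4 * v, u ^ 2 + v ^ 2 - 4] (pderiv 2 (pderiv 2 P)))) v := by
    refine (((((hasDerivAt_id v).const_mul (-(2 * ((m : ℝ) + 1)))).mul (hT (m + 2) v)).mul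
        (hQ P v)).add ((hT (m + 1) v).mul (((hQ (pderiv 1 P) v).const_mul 4).add
        (((hasDerivAt_id v).const_mul 2).mul (hQ (pderiv 2 P) v))))).congr_deriv ?_
    rw [show pderiv 2 (pderiv 1 P) = pderiv 1 (pderiv 2 P) from pderiv_comm' 2 1 P]
    simp only [id_eq, Pi.add_apply, Pi.mul_apply]
    push_cast
    ring
  exact hF1.deriv

set_option maxHeartbeats 4000000

theorem stmt11 (n : ℕ) (p : (Fin 3 → ℝ) → ℝ)
    (h_poly : ∃ P : MvPolynomial (Fin 3) ℝ, ∀ x, p x = MvPolynomial.eval x P)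
    (h_hom : ∀ (t : ℝ) (x : Fin 3 → ℝ), p (t • x) = t ^ n * p x)
    (h_harm : ∀ x : Fin 3 → ℝ,
      pd 0 (pd 0 p) x + pd 1 (pd 1 p) x + pd 2 (pd 2 p) x = 0) :
    ∀ q : ℝ × ℝ,
      lap2 (fun q' => p (invStereo3 q' - ![0, 0, 1])) q =
        -((n : ℝ) * (n + 1)) * (4 / (q.1 ^ 2 + q.2 ^ 2 + 4)) ^ 2 *
          p (invStereo3 q - ![0, 0, 1]) := by
  obtain ⟨P, hp⟩ := h_poly
  have hpe : p = fun x => eval x P := funext hp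
  subst hpe
  have hsmul : ∀ (t : ℝ) (x : Fin 3 → ℝ), eval (t • x) P = t ^ n * eval x P := h_hom
  -- derivative of eval along coordinate updates
  have hupd : ∀ (x : Fin 3 → ℝ) (i : Fin 3) (Q : MvPolynomial (Fin 3) ℝ),
      HasDerivAt (fun s => eval (Function.update x i s) Q) (eval x (pderiv i Q)) (x i) := by
    intro x i Q
    have hc : ∀ k : Fin 3, HasDerivAt (fun s : ℝ => Function.update x i s k)
        ((fun k' : Fin 3 => if k' = i then (1 : ℝ) else 0) k) (x i) := by
      intro k
      by_cases hk : k = i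
      · subst hk; simpa [Function.update_self] using
          (hasDerivAt_id' (x := x k) : HasDerivAt (fun s : ℝ => s) 1 (x k))
      · simpa [Function.update_of_ne hk, hk] using hasDerivAt_const (x i) (x k)
    have h := hasDerivAt_eval_comp Q hc
    simpa [Function.update_eq_self, mul_ite, mul_one, mul_zero, Finset.sum_ite_eq'] using h
  have hpd : ∀ (Q : MvPolynomial (Fin 3) ℝ) (i : Fin 3) (x : Fin 3 → ℝ),
      pd i (fun y => eval y Q) x = eval x (pderiv i Q) := by
    intro Q i x
    exact (hupd x i Q).deriv
  -- harmonicity in eval form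
  have hharm : ∀ x : Fin 3 → ℝ,
      eval x (pderiv 0 (pderiv 0 P)) + eval x (pderiv 1 (pderiv 1 P))
        + eval x (pderiv 2 (pderiv 2 P)) = 0 := by
    intro x
    have h := h_harm x
    have e : ∀ i : Fin 3, pd i (fun y => eval y P) = fun y => eval y (pderiv i P) :=
      fun i => funext fun y => hpd P i y
    rw [e 0, e 1, e 2] at h
    rw [hpd, hpd, hpd] at h
    exact h
  -- curve t ↦ t • x
  have hcurve1 : ∀ (x : Fin 3 → ℝ) (k : Fin 3),
      HasDerivAt (fun s : ℝ => (s • x) k) (x k) 1 := by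
    intro x k
    simpa [Pi.smul_apply, smul_eq_mul] using (hasDerivAt_id (1 : ℝ)).mul_const (x k)
  -- Euler identity
  have heuler : ∀ x : Fin 3 → ℝ,
      x 0 * eval x (pderiv 0 P) + x 1 * eval x (pderiv 1 P) + x 2 * eval x (pderiv 2 P)
        = (n : ℝ) * eval x P := by
    intro x
    have h1 := hasDerivAt_eval_comp P (hcurve1 x)
    have h2 : HasDerivAt (fun s : ℝ => s ^ n * eval x P)
        ((n : ℝ) * 1 ^ (n - 1) * eval x P) 1 := (hasDerivAt_pow n 1).mul_const _
    have he : (fun s : ℝ => eval (s • x) P) = fun s : ℝ => s ^ n * eval x P :=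
      funext fun s => hsmul s x
    rw [he] at h1
    have h3 := h1.unique h2
    simp only [Fin.sum_univ_three, one_smul, one_pow, mul_one] at h3
    linear_combination h3
  -- homogeneity of the partial derivatives
  have hstep : ∀ (i : Fin 3) (t : ℝ) (x : Fin 3 → ℝ),
      t * eval (t • x) (pderiv i P) = t ^ n * eval x (pderiv i P) := by
    intro i t x
    have hc : ∀ k : Fin 3, HasDerivAt (fun s : ℝ => (t • Function.update x i s) k)
        ((fun k' : Fin 3 => if k' = i then t else 0) k) (x i) := by
      intro k
      by_cases hk : k = i
      · subst hk
        simpa [Pi.smul_apply, smul_eq_mul, Function.update_self] using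
          (hasDerivAt_id (x k)).const_mul t
      · simpa [Pi.smul_apply, smul_eq_mul, Function.update_of_ne hk, hk] using
          hasDerivAt_const (x i) (t * x k)
    have h1 := hasDerivAt_eval_comp P (x := fun s => t • Function.update x i s)
      (d := fun k' : Fin 3 => if k' = i then t else 0) hc
    have h2 : HasDerivAt (fun s : ℝ => t ^ n * eval (Function.update x i s) P)
        (t ^ n * eval x (pderiv i P)) (x i) := (hupd x i P).const_mul _
    have he : (fun s : ℝ => eval (t • Function.update x i s) P)
        = fun s : ℝ => t ^ n * eval (Function.update x i s) P :=
      by funext s; exact hsmul t (Function.update x i s)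
    rw [he] at h1
    have h3 := h1.unique h2
    simpa [Function.update_eq_self, mul_ite, mul_one, mul_zero, Finset.sum_ite_eq',
      mul_comm] using h3
  -- Euler identity for the partial derivatives
  have heuler2 : ∀ x : Fin 3 → ℝ,
      x 0 * eval x (pderiv 0 (pderiv 2 P)) + x 1 * eval x (pderiv 1 (pderiv 2 P))
        + x 2 * eval x (pderiv 2 (pderiv 2 P))
        = (n : ℝ) * eval x (pderiv 2 P) - eval x (pderiv 2 P) := by
    intro x
    have h1 := (hasDerivAt_id' (x := (1:ℝ))).mul (hasDerivAt_eval_comp (pderiv 2 P) (hcurve1 x))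
    have h2 : HasDerivAt (fun s : ℝ => s ^ n * eval x (pderiv 2 P))
        ((n : ℝ) * 1 ^ (n - 1) * eval x (pderiv 2 P)) 1 := (hasDerivAt_pow n 1).mul_const _
    have he : (fun s : ℝ => s * eval (s • x) (pderiv 2 P))
        = fun s : ℝ => s ^ n * eval x (pderiv 2 P) := funext fun s => hstep 2 s x
    rw [← he] at h2
    have h3 := h1.unique h2
    simp only [Fin.sum_univ_three, one_smul, one_pow, mul_one, one_mul, id_eq] at h3
    linear_combination h3
  -- pointwise formula for the composite
  have hsne : ∀ u v : ℝ, u ^ 2 + v ^ 2 + 4 ≠ 0 := fun u v => by positivity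
  have hf : ∀ u v : ℝ, eval (invStereo3 (u, v) - ![0, 0, 1]) P
      = ((u ^ 2 + v ^ 2 + 4)⁻¹) ^ n * eval ![4 * u, 4 * v, u ^ 2 + v ^ 2 - 4] P := by
    intro u v
    have hst : invStereo3 (u, v) - ![0, 0, 1]
        = (u ^ 2 + v ^ 2 + 4)⁻¹ • ![4 * u, 4 * v, u ^ 2 + v ^ 2 - 4] := by
      funext k
      fin_cases k <;> simp [invStereo3, Pi.sub_apply, Pi.smul_apply, smul_eq_mul] <;>
        field_simp <;> ring
    rw [hst]
    exact hsmul _ _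
  intro q
  obtain ⟨u, v⟩ := q
  rcases n with _ | m
  · -- n = 0 : p is constant
    have hconst : ∀ x : Fin 3 → ℝ, eval x P = eval 0 P := by
      intro x
      have h := hsmul 0 x
      simpa using h.symm
    have e : (fun q' : ℝ × ℝ => eval (invStereo3 q' - ![0, 0, 1]) P)
        = fun _ : ℝ × ℝ => eval 0 P := by funext q'; exact hconst _
    rw [show (fun q' : ℝ × ℝ => (fun x => eval x P) (invStereo3 q' - ![0, 0, 1]))
        = fun _ : ℝ × ℝ => eval 0 P from e]
    simp [lap2]
  · -- main case
    simp only [lap2]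
    have e1 : (fun a : ℝ => (fun x => eval x P) (invStereo3 (a, ((u, v) : ℝ × ℝ).2) - ![0, 0, 1]))
        = fun a : ℝ =>
          ((a ^ 2 + v ^ 2 + 4)⁻¹) ^ (m + 1) * eval ![4 * a, 4 * v, a ^ 2 + v ^ 2 - 4] P :=
      funext fun a => hf a v
    have e2 : (fun b : ℝ => (fun x => eval x P) (invStereo3 (((u, v) : ℝ × ℝ).1, b) - ![0, 0, 1]))
        = fun b : ℝ =>
          ((u ^ 2 + b ^ 2 + 4)⁻¹) ^ (m + 1) * eval ![4 * u, 4 * b, u ^ 2 + b ^ 2 - 4] P :=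
      by funext b; exact hf u b
    rw [e1, e2, main_u P m v u, main_v P m u v, hf u v]
    have hE := heuler ![4 * u, 4 * v, u ^ 2 + v ^ 2 - 4]
    have hE2 := heuler2 ![4 * u, 4 * v, u ^ 2 + v ^ 2 - 4]
    have hH := hharm ![4 * u, 4 * v, u ^ 2 + v ^ 2 - 4]
    simp only [Matrix.cons_val_zero, Matrix.cons_val_one, Matrix.head_cons,
      Matrix.cons_val_two, Matrix.tail_cons] at hE hE2
    have hI : (u ^ 2 + v ^ 2 + 4)⁻¹ * (u ^ 2 + v ^ 2 + 4) = 1 := inv_mul_cancel₀ (hsne u v)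
    push_cast at hE hE2 ⊢
    linear_combination
      (-4 * ((m : ℝ) + 1) * ((u ^ 2 + v ^ 2 + 4)⁻¹) ^ m * ((u ^ 2 + v ^ 2 + 4)⁻¹) ^ 2) * hE
      + (4 * ((u ^ 2 + v ^ 2 + 4)⁻¹) ^ m * (u ^ 2 + v ^ 2 + 4)⁻¹) * hE2
      + (16 * ((u ^ 2 + v ^ 2 + 4)⁻¹) ^ m * (u ^ 2 + v ^ 2 + 4)⁻¹) * hH
      + (4 * ((m : ℝ) + 1) * ((m : ℝ) + 2) * ((u ^ 2 + v ^ 2 + 4)⁻¹) ^ m *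
          ((u ^ 2 + v ^ 2 + 4)⁻¹) ^ 2 * eval ![4 * u, 4 * v, u ^ 2 + v ^ 2 - 4] P
        - 4 * ((m : ℝ) + 1) * ((u ^ 2 + v ^ 2 + 4)⁻¹) ^ m * (u ^ 2 + v ^ 2 + 4)⁻¹ *
          eval ![4 * u, 4 * v, u ^ 2 + v ^ 2 - 4] (pderiv 2 P)) * hI
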